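/- Let H = (V, E) be a finite collection of hyperedges with monotone submodular splitting functions g_f : 2^f → ℝ≥0, g_f(∅)=0. Fix e ∈ E and define ρ_e := ∑_{v ∈ V} g_e({v} ∩ e) / (∑_{f ∈ E} g_f({v} ∩ f)) with the convention that a fraction with zero denominator is zero. Then for every S ⊆ V with cut_H(S) > 0, g_e(S ∩ e) / cut_H(S) ≤ ρ_e, and moreover ∑_{e ∈ E} ρ_e ≤ |V|. -/
import Mathlib


/-- Over-estimated importance of hyperedge `e` (monotone case); in Lean, `x / 0 = 0`,
matching the convention that a fraction with zero denominator is zero. -/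
noncomputable def rhoMono {V ι : Type*} [Fintype V] [DecidableEq V]
    (E : Finset ι) (edge : ι → Finset V) (g : ι → Finset V → ℝ) (e : ι) : ℝ :=
  ∑ v : V, g e ({v} ∩ edge e) / ∑ f ∈ E, g f ({v} ∩ edge f)

/-- The cut value of `S` in the submodular hypergraph. -/
def cutH {V ι : Type*} [DecidableEq V]
    (E : Finset ι) (edge : ι → Finset V) (g : ι → Finset V → ℝ)
    (S : Finset V) : ℝ :=
  ∑ f ∈ E, g f (S ∩ edge f)

theorem stmt6 {V ι : Type*} [Fintype V] [DecidableEq V]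
    (E : Finset ι) (edge : ι → Finset V) (g : ι → Finset V → ℝ)
    (hg0 : ∀ f ∈ E, g f ∅ = 0)
    (hnn : ∀ f ∈ E, ∀ S ⊆ edge f, 0 ≤ g f S)
    (hmono : ∀ f ∈ E, ∀ A ⊆ edge f, ∀ B ⊆ edge f, A ⊆ B → g f A ≤ g f B)
    (hsub : ∀ f ∈ E, ∀ A ⊆ edge f, ∀ B ⊆ edge f,
      g f (A ∪ B) + g f (A ∩ B) ≤ g f A + g f B)
    (e : ι) (he : e ∈ E) :
    (∀ S : Finset V, 0 < cutH E edge g S →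
      g e (S ∩ edge e) / cutH E edge g S ≤ rhoMono E edge g e) ∧
    ∑ e' ∈ E, rhoMono E edge g e' ≤ (Fintype.card V : ℝ) := by
  set d : V → ℝ := fun v => ∑ f ∈ E, g f ({v} ∩ edge f) with hd
  have hdnn : ∀ v, 0 ≤ d v := fun v =>
    Finset.sum_nonneg fun f hf => hnn f hf _ (Finset.inter_subset_right)
  -- subadditivity
  have hsubadd : ∀ f ∈ E, ∀ S : Finset V,
      g f (S ∩ edge f) ≤ ∑ v ∈ S, g f ({v} ∩ edge f) := by
    intro f hf S
    induction S using Finset.induction with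
    | empty => simp [hg0 f hf]
    | @insert a s hx ih =>
      rw [Finset.sum_insert hx, Finset.insert_eq, Finset.union_inter_distrib_right]
      have := hsub f hf ({a} ∩ edge f) Finset.inter_subset_right
        (s ∩ edge f) Finset.inter_subset_right
      have h0 : 0 ≤ g f (({a} ∩ edge f) ∩ (s ∩ edge f)) :=
        hnn f hf _ (Finset.Subset.trans Finset.inter_subset_right Finset.inter_subset_right)
      linarith
  constructor
  · intro S hS
    rw [div_le_iff₀ hS]
    have key : ∀ v ∈ S, g e ({v} ∩ edge e) ≤
        (g e ({v} ∩ edge e) / d v) * cutH E edge g S := by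
      intro v hv
      have hle : g e ({v} ∩ edge e) ≤ d v :=
        Finset.single_le_sum (f := fun f => g f ({v} ∩ edge f))
          (fun f hf => hnn f hf _ Finset.inter_subset_right) he
      rcases eq_or_lt_of_le (hdnn v) with h0 | h0
      · have : g e ({v} ∩ edge e) = 0 := le_antisymm (by rw [← h0] at hle; exact hle)
          (hnn e he _ Finset.inter_subset_right)
        simp [this]
      · have hdS : d v ≤ cutH E edge g S := by
          apply Finset.sum_le_sum
          intro f hf
          exact hmono f hf _ Finset.inter_subset_right _ Finset.inter_subset_right
            (Finset.inter_subset_inter (by simp [Finset.singleton_subset_iff, hv])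
              (Finset.Subset.refl _))
        calc g e ({v} ∩ edge e) = (g e ({v} ∩ edge e) / d v) * d v := by
              field_simp
          _ ≤ (g e ({v} ∩ edge e) / d v) * cutH E edge g S := by
              apply mul_le_mul_of_nonneg_left hdS
              exact div_nonneg (hnn e he _ Finset.inter_subset_right) (hdnn v)
    calc g e (S ∩ edge e) ≤ ∑ v ∈ S, g e ({v} ∩ edge e) := hsubadd e he S
      _ ≤ ∑ v ∈ S, (g e ({v} ∩ edge e) / d v) * cutH E edge g S :=
          Finset.sum_le_sum key
      _ ≤ ∑ v : V, (g e ({v} ∩ edge e) / d v) * cutH E edge g S := by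
          apply Finset.sum_le_sum_of_subset_of_nonneg (Finset.subset_univ S)
          intro v _ _
          exact mul_nonneg (div_nonneg (hnn e he _ Finset.inter_subset_right) (hdnn v))
            hS.le
      _ = rhoMono E edge g e * cutH E edge g S := by
          rw [rhoMono, Finset.sum_mul]
  · have : ∑ e' ∈ E, rhoMono E edge g e' = ∑ v : V, d v / d v := by
      unfold rhoMono
      rw [Finset.sum_comm]
      congr 1; ext v
      rw [← Finset.sum_div]
    rw [this]
    calc ∑ v : V, d v / d v ≤ ∑ _v : V, (1 : ℝ) := by
          apply Finset.sum_le_sum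
          intro v _
          rcases eq_or_ne (d v) 0 with h | h
          · simp [h]
          · rw [div_self h]
      _ = (Fintype.card V : ℝ) := by simp
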